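/- arXiv:2012.10800 — 2 statements merged into one kernel-verified Lean document; each statement's English description precedes it below -/
import Mathlib

section
/- For a PDG score ⟦M⟧_γ(μ) = Inc(μ) + γ·IDef(μ), where IDef(μ) = Σ_{L=(X,Y)} H_μ(Y|X) − H(μ), if 0 < γ ≤ min_L β_L then ⟦M⟧_γ is a strictly convex function of μ on the probability simplex, and hence has a unique minimizer. -/
open scoped Classical BigOperators
set_option linter.unusedSectionVars false
set_option linter.unusedVariables false

noncomputable section

/-- `μ` is a probability distribution on the finite set `W`. -/
def IsDist {W : Type*} [Fintype W] (μ : W → ℝ) : Prop :=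
  (∀ w, 0 ≤ μ w) ∧ ∑ w, μ w = 1

/-- Shannon entropy `H(μ)`. -/
def entropy {W : Type*} [Fintype W] (μ : W → ℝ) : ℝ :=
  ∑ w, Real.negMulLog (μ w)

/-- Relative entropy `D(μ‖ν)`, summing over the support of `μ`. -/
def klR {W : Type*} [Fintype W] (μ ν : W → ℝ) : ℝ :=
  ∑ w, if 0 < μ w then μ w * Real.log (μ w / ν w) else 0

/-- Marginal probability of the event `f = a` under `μ`. -/
def pm {W A : Type*} [Fintype W] (μ : W → ℝ) (f : W → A) (a : A) : ℝ :=
  ∑ w, if f w = a then μ w else 0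

/-- Joint probability of `f = a` and `g = b` under `μ`. -/
def pm2 {W A B : Type*} [Fintype W] (μ : W → ℝ) (f : W → A) (g : W → B)
    (a : A) (b : B) : ℝ :=
  ∑ w, if f w = a ∧ g w = b then μ w else 0

/-- Conditional distribution of `g` given `f = a` under `μ`. -/
def condDist {W A B : Type*} [Fintype W] (μ : W → ℝ) (f : W → A) (g : W → B)
    (a : A) : B → ℝ :=
  fun b => pm2 μ f g a b / pm μ f a

/-- Conditional entropy `H(g | f)` under `μ`. -/
def condEnt {W A B : Type*} [Fintype W] [Fintype A] [Fintype B]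
    (μ : W → ℝ) (f : W → A) (g : W → B) : ℝ :=
  ∑ a, ∑ b, if 0 < pm2 μ f g a b then
    -(pm2 μ f g a b * Real.log (pm2 μ f g a b / pm μ f a)) else 0

/-- The incompatibility `Inc(μ) = Σ_L β_L E_{x∼μ_X}[D(μ(Y|X=x) ‖ p_L(x))]`. -/
def Inc {W ι : Type*} [Fintype W] [Fintype ι] {A B : ι → Type*}
    [∀ L, Fintype (A L)] [∀ L, Fintype (B L)]
    (X : (L : ι) → W → A L) (Y : (L : ι) → W → B L)
    (p : (L : ι) → A L → B L → ℝ) (β : ι → ℝ) (μ : W → ℝ) : ℝ :=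
  ∑ L, β L * ∑ a, pm μ (X L) a * klR (condDist μ (X L) (Y L) a) (p L a)

/-- Information deficiency `IDef(μ) = Σ_L H_μ(Y|X) - H(μ)`. -/
def IDef {W ι : Type*} [Fintype W] [Fintype ι] {A B : ι → Type*}
    [∀ L, Fintype (A L)] [∀ L, Fintype (B L)]
    (X : (L : ι) → W → A L) (Y : (L : ι) → W → B L) (μ : W → ℝ) : ℝ :=
  (∑ L, condEnt μ (X L) (Y L)) - entropy μ



section Aux
variable {W A B : Type*} [Fintype W] [Fintype A] [Fintype B]

lemma pm_nonneg (μ : W → ℝ) (hμ : ∀ w, 0 ≤ μ w) (f : W → A) (a : A) : 0 ≤ pm μ f a :=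
  Finset.sum_nonneg fun w _ => by split <;> simp [hμ w]
lemma pm2_nonneg (μ : W → ℝ) (hμ : ∀ w, 0 ≤ μ w) (f : W → A) (g : W → B) (a : A) (b : B) :
    0 ≤ pm2 μ f g a b :=
  Finset.sum_nonneg fun w _ => by split <;> simp [hμ w]
lemma pm2_le_pm (μ : W → ℝ) (hμ : ∀ w, 0 ≤ μ w) (f : W → A) (g : W → B) (a : A) (b : B) :
    pm2 μ f g a b ≤ pm μ f a := by
  refine Finset.sum_le_sum fun w _ => ?_
  by_cases h : f w = a
  · by_cases h2 : g w = b <;> simp [h, h2, hμ w]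
  · simp [h]
lemma pm_le_one (μ : W → ℝ) (hμ : ∀ w, 0 ≤ μ w) (hs : ∑ w, μ w = 1) (f : W → A) (a : A) :
    pm μ f a ≤ 1 := by
  rw [← hs]
  refine Finset.sum_le_sum fun w _ => ?_
  split <;> simp [hμ w]
lemma pm_lin (μ ν : W → ℝ) (l m : ℝ) (f : W → A) (a : A) :
    pm (fun w => l * μ w + m * ν w) f a = l * pm μ f a + m * pm ν f a := by
  unfold pm
  rw [Finset.mul_sum, Finset.mul_sum, ← Finset.sum_add_distrib]
  refine Finset.sum_congr rfl fun w _ => by split <;> simp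
lemma pm2_lin (μ ν : W → ℝ) (l m : ℝ) (f : W → A) (g : W → B) (a : A) (b : B) :
    pm2 (fun w => l * μ w + m * ν w) f g a b = l * pm2 μ f g a b + m * pm2 ν f g a b := by
  unfold pm2
  rw [Finset.mul_sum, Finset.mul_sum, ← Finset.sum_add_distrib]
  refine Finset.sum_congr rfl fun w _ => by split <;> simp

/-- The convexity-carrying part of the score for one edge. -/
def Kfun (μ : W → ℝ) (f : W → A) (g : W → B) : ℝ :=
  ∑ a, ∑ b, (pm2 μ f g a b * Real.log (pm2 μ f g a b)
    - pm2 μ f g a b * Real.log (pm μ f a))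

lemma sum_pm2_mul (μ : W → ℝ) (f : W → A) (g : W → B) (F : A → B → ℝ) :
    ∑ a, ∑ b, pm2 μ f g a b * F a b = ∑ w, μ w * F (f w) (g w) := by
  unfold pm2
  simp only [Finset.sum_mul, ite_mul, zero_mul]
  have h1 : ∀ a : A, (∑ b, ∑ w, if f w = a ∧ g w = b then μ w * F a b else 0)
      = ∑ w, ∑ b, if f w = a ∧ g w = b then μ w * F a b else 0 := fun a => Finset.sum_comm
  simp only [h1]
  rw [Finset.sum_comm]
  refine Finset.sum_congr rfl fun w _ => ?_
  simp [ite_and, Finset.sum_ite_eq]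

lemma condEnt_eq (μ : W → ℝ) (hμ : ∀ w, 0 ≤ μ w) (f : W → A) (g : W → B) :
    condEnt μ f g = - Kfun μ f g := by
  unfold condEnt Kfun
  rw [← Finset.sum_neg_distrib]
  refine Finset.sum_congr rfl fun a _ => ?_
  rw [← Finset.sum_neg_distrib]
  refine Finset.sum_congr rfl fun b _ => ?_
  by_cases h : 0 < pm2 μ f g a b
  · have hpm : 0 < pm μ f a := lt_of_lt_of_le h (pm2_le_pm μ hμ f g a b)
    rw [if_pos h, Real.log_div h.ne' hpm.ne']
    ring
  · have h0 : pm2 μ f g a b = 0 := le_antisymm (not_lt.1 h) (pm2_nonneg μ hμ f g a b)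
    rw [if_neg h, h0]
    simp

lemma inc_sum_eq (μ : W → ℝ) (hμ : ∀ w, 0 ≤ μ w) (f : W → A) (g : W → B)
    (q : A → B → ℝ) (hq : ∀ a b, 0 < q a b) :
    ∑ a, pm μ f a * klR (condDist μ f g a) (q a)
      = Kfun μ f g - ∑ w, μ w * Real.log (q (f w) (g w)) := by
  rw [← sum_pm2_mul μ f g (fun a b => Real.log (q a b))]
  unfold Kfun
  rw [← Finset.sum_sub_distrib]
  refine Finset.sum_congr rfl fun a _ => ?_
  rw [← Finset.sum_sub_distrib]
  rcases (pm_nonneg μ hμ f a).eq_or_lt with h0 | hpm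
  · have hb : ∀ b, pm2 μ f g a b = 0 := fun b =>
      le_antisymm (h0 ▸ pm2_le_pm μ hμ f g a b) (pm2_nonneg μ hμ f g a b)
    rw [← h0]
    simp [hb]
  · rw [klR, Finset.mul_sum]
    refine Finset.sum_congr rfl fun b _ => ?_
    by_cases h2 : 0 < pm2 μ f g a b
    · have hcd : 0 < condDist μ f g a b := div_pos h2 hpm
      rw [if_pos hcd]
      show pm μ f a * (pm2 μ f g a b / pm μ f a *
          Real.log (pm2 μ f g a b / pm μ f a / q a b)) = _
      rw [Real.log_div (div_ne_zero h2.ne' hpm.ne') (hq a b).ne',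
        Real.log_div h2.ne' hpm.ne']
      field_simp
    · have h0' : pm2 μ f g a b = 0 := le_antisymm (not_lt.1 h2) (pm2_nonneg μ hμ f g a b)
      have hcd : condDist μ f g a b = 0 := by simp [condDist, h0']
      rw [hcd]
      simp [h0']

lemma entropy_eq (μ : W → ℝ) : entropy μ = -∑ w, μ w * Real.log (μ w) := by
  unfold entropy
  rw [← Finset.sum_neg_distrib]
  exact Finset.sum_congr rfl fun w _ => by simp [Real.negMulLog]

lemma logsum {a b c d : ℝ} (ha : 0 < a) (hb : 0 < b) (hc : 0 < c) (hd : 0 < d) :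
    (a + b) * Real.log ((a + b) / (c + d)) ≤ a * Real.log (a / c) + b * Real.log (b / d) := by
  have hcd : 0 < c + d := by linarith
  have hab : 0 < a + b := by linarith
  have key : ∀ x y : ℝ, 0 < x → 0 < y →
      x * Real.log ((a + b) / (c + d)) - x * Real.log (x / y) ≤ y * (a + b) / (c + d) - x := by
    intro x y hx hy
    have ht : 0 < ((a + b) / (c + d)) / (x / y) := by positivity
    have h1 : Real.log (((a + b) / (c + d)) / (x / y)) ≤ ((a + b) / (c + d)) / (x / y) - 1 :=
      Real.log_le_sub_one_of_pos ht
    have h2 : Real.log (((a + b) / (c + d)) / (x / y))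
        = Real.log ((a + b) / (c + d)) - Real.log (x / y) :=
      Real.log_div (by positivity) (by positivity)
    have h3 := mul_le_mul_of_nonneg_left h1 hx.le
    rw [h2] at h3
    have h4 : x * (((a + b) / (c + d)) / (x / y) - 1) = y * (a + b) / (c + d) - x := by
      field_simp
    rw [h4] at h3
    linarith [mul_sub x (Real.log ((a + b) / (c + d))) (Real.log (x / y)), h3]
  have k1 := key a c ha hc
  have k2 := key b d hb hd
  have h5 : c * (a + b) / (c + d) + d * (a + b) / (c + d) = a + b := by
    field_simp
  have := add_le_add k1 k2
  nlinarith [this]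

/-- convexity of `ψ(x,y) = x log x - x log y` on `0 ≤ x ≤ y`. -/
lemma psi_cvx {x1 y1 x2 y2 l : ℝ} (hx1 : 0 ≤ x1) (h1 : x1 ≤ y1) (hx2 : 0 ≤ x2) (h2 : x2 ≤ y2)
    (hl : 0 < l) (hl1 : l < 1) :
    (l * x1 + (1 - l) * x2) * Real.log (l * x1 + (1 - l) * x2)
      - (l * x1 + (1 - l) * x2) * Real.log (l * y1 + (1 - l) * y2)
    ≤ l * (x1 * Real.log x1 - x1 * Real.log y1)
      + (1 - l) * (x2 * Real.log x2 - x2 * Real.log y2) := by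
  have hl' : 0 < 1 - l := by linarith
  have psi_eq : ∀ x y : ℝ, 0 < x → 0 < y →
      x * Real.log x - x * Real.log y = x * Real.log (x / y) := by
    intro x y hx hy
    rw [Real.log_div hx.ne' hy.ne', mul_sub]
  rcases hx1.eq_or_lt with hz1 | hp1
  · rcases hx2.eq_or_lt with hz2 | hp2
    · simp [← hz1, ← hz2]
    · have hy2 : 0 < y2 := lt_of_lt_of_le hp2 h2
      have hxc : 0 < (1 - l) * x2 := by positivity
      have hyc : 0 < l * y1 + (1 - l) * y2 := by nlinarith [le_trans hx1 h1]
      rw [← hz1]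
      simp only [mul_zero, zero_mul, add_zero, zero_add, sub_zero, zero_sub]
      rw [psi_eq _ _ hxc hyc, psi_eq _ _ hp2 hy2]
      have hmono : ((1 - l) * x2) / (l * y1 + (1 - l) * y2) ≤ x2 / y2 := by
        rw [div_le_div_iff₀ hyc hy2]
        nlinarith [mul_nonneg (mul_nonneg hp2.le hl.le) (le_trans hx1 h1)]
      have := Real.log_le_log (by positivity) hmono
      calc (1 - l) * x2 * Real.log ((1 - l) * x2 / (l * y1 + (1 - l) * y2))
          ≤ (1 - l) * x2 * Real.log (x2 / y2) := mul_le_mul_of_nonneg_left this hxc.le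
        _ = (1 - l) * (x2 * Real.log (x2 / y2)) := by ring
  · rcases hx2.eq_or_lt with hz2 | hp2
    · have hy1 : 0 < y1 := lt_of_lt_of_le hp1 h1
      have hxc : 0 < l * x1 := by positivity
      have hyc : 0 < l * y1 + (1 - l) * y2 := by nlinarith [le_trans hx2 h2]
      rw [← hz2]
      simp only [mul_zero, zero_mul, add_zero, zero_add, sub_zero, zero_sub]
      rw [psi_eq _ _ hxc hyc, psi_eq _ _ hp1 hy1]
      have hmono : (l * x1) / (l * y1 + (1 - l) * y2) ≤ x1 / y1 := by
        rw [div_le_div_iff₀ hyc hy1]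
        nlinarith [mul_nonneg (mul_nonneg hp1.le hl'.le) (le_trans hx2 h2)]
      have := Real.log_le_log (by positivity) hmono
      calc l * x1 * Real.log (l * x1 / (l * y1 + (1 - l) * y2))
          ≤ l * x1 * Real.log (x1 / y1) := mul_le_mul_of_nonneg_left this hxc.le
        _ = l * (x1 * Real.log (x1 / y1)) := by ring
    · have hy1 : 0 < y1 := lt_of_lt_of_le hp1 h1
      have hy2 : 0 < y2 := lt_of_lt_of_le hp2 h2
      have hA : 0 < l * x1 := by positivity
      have hB : 0 < (1 - l) * x2 := by positivity
      have hC : 0 < l * y1 := by positivity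
      have hD : 0 < (1 - l) * y2 := by positivity
      have hls := logsum hA hB hC hD
      rw [psi_eq _ _ (by positivity) (by positivity), psi_eq _ _ hp1 hy1, psi_eq _ _ hp2 hy2]
      have e1 : (l * x1) / (l * y1) = x1 / y1 := mul_div_mul_left _ _ hl.ne'
      have e2 : ((1 - l) * x2) / ((1 - l) * y2) = x2 / y2 := mul_div_mul_left _ _ hl'.ne'
      rw [e1, e2] at hls
      calc (l * x1 + (1 - l) * x2) * Real.log ((l * x1 + (1 - l) * x2) / (l * y1 + (1 - l) * y2))
          ≤ l * x1 * Real.log (x1 / y1) + (1 - l) * x2 * Real.log (x2 / y2) := hls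
        _ = l * (x1 * Real.log (x1 / y1)) + (1 - l) * (x2 * Real.log (x2 / y2)) := by ring

lemma Kfun_convex (μ ν : W → ℝ) (hμ : ∀ w, 0 ≤ μ w) (hν : ∀ w, 0 ≤ ν w)
    (f : W → A) (g : W → B) (l : ℝ) (hl : 0 < l) (hl1 : l < 1) :
    Kfun (fun w => l * μ w + (1 - l) * ν w) f g ≤ l * Kfun μ f g + (1 - l) * Kfun ν f g := by
  unfold Kfun
  rw [Finset.mul_sum, Finset.mul_sum, ← Finset.sum_add_distrib]
  refine Finset.sum_le_sum fun a _ => ?_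
  rw [Finset.mul_sum, Finset.mul_sum, ← Finset.sum_add_distrib]
  refine Finset.sum_le_sum fun b _ => ?_
  rw [pm2_lin, pm_lin]
  exact psi_cvx (pm2_nonneg μ hμ f g a b) (pm2_le_pm μ hμ f g a b)
    (pm2_nonneg ν hν f g a b) (pm2_le_pm ν hν f g a b) hl hl1

lemma strictConvexOn_mul_log : StrictConvexOn ℝ (Set.Ici (0:ℝ)) (fun x : ℝ => x * Real.log x) := by
  have h := Real.strictConcaveOn_negMulLog.neg
  have e : (-Real.negMulLog) = fun x : ℝ => x * Real.log x := by
    funext x; simp [Real.negMulLog]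
  rwa [e] at h

lemma negent_strict (μ ν : W → ℝ) (hμ : IsDist μ) (hν : IsDist ν) (hne : μ ≠ ν)
    (l : ℝ) (hl : 0 < l) (hl1 : l < 1) :
    ∑ w, (l * μ w + (1 - l) * ν w) * Real.log (l * μ w + (1 - l) * ν w)
      < l * ∑ w, μ w * Real.log (μ w) + (1 - l) * ∑ w, ν w * Real.log (ν w) := by
  obtain ⟨w0, hw0⟩ : ∃ w, μ w ≠ ν w := by
    by_contra h; push_neg at h; exact hne (funext h)
  have hf := strictConvexOn_mul_log
  rw [Finset.mul_sum, Finset.mul_sum, ← Finset.sum_add_distrib]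
  refine Finset.sum_lt_sum (fun w _ => ?_) ⟨w0, Finset.mem_univ w0, ?_⟩
  · have := hf.convexOn.2 (Set.mem_Ici.2 (hμ.1 w)) (Set.mem_Ici.2 (hν.1 w))
      hl.le (by linarith : (0:ℝ) ≤ 1 - l) (by ring)
    simpa [smul_eq_mul] using this
  · have := hf.2 (Set.mem_Ici.2 (hμ.1 w0)) (Set.mem_Ici.2 (hν.1 w0)) hw0
      hl (by linarith : (0:ℝ) < 1 - l) (by ring)
    simpa [smul_eq_mul] using this

lemma continuous_pm (f : W → A) (a : A) : Continuous fun μ : W → ℝ => pm μ f a := by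
  unfold pm
  refine continuous_finset_sum _ fun w _ => ?_
  by_cases h : f w = a
  · simpa [h] using continuous_apply w
  · simpa [h] using continuous_const

lemma continuous_pm2 (f : W → A) (g : W → B) (a : A) (b : B) :
    Continuous fun μ : W → ℝ => pm2 μ f g a b := by
  unfold pm2
  refine continuous_finset_sum _ fun w _ => ?_
  by_cases h : f w = a ∧ g w = b
  · simpa [h] using continuous_apply w
  · simpa [h] using continuous_const

lemma continuousOn_pm2_mul_log_pm (f : W → A) (g : W → B) (a : A) (b : B) :
    ContinuousOn (fun μ : W → ℝ => pm2 μ f g a b * Real.log (pm μ f a)) (stdSimplex ℝ W) := by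
  intro ν hν
  by_cases hpm : pm ν f a = 0
  · have hν1 : ∀ w, 0 ≤ ν w := hν.1
    have h2 : pm2 ν f g a b = 0 :=
      le_antisymm (hpm ▸ pm2_le_pm ν hν1 f g a b) (pm2_nonneg ν hν1 f g a b)
    have htarget : pm2 ν f g a b * Real.log (pm ν f a) = 0 := by simp [h2]
    rw [ContinuousWithinAt, htarget]
    have hg : Filter.Tendsto (fun μ : W → ℝ => Real.negMulLog (pm μ f a))
        (nhdsWithin ν (stdSimplex ℝ W)) (nhds 0) := by
      have h0 : Real.negMulLog (pm ν f a) = 0 := by simp [hpm, Real.negMulLog]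
      have hc : Filter.Tendsto (fun μ : W → ℝ => Real.negMulLog (pm μ f a)) (nhds ν)
          (nhds (Real.negMulLog (pm ν f a))) :=
        (Real.continuous_negMulLog.comp (continuous_pm f a)).tendsto ν
      rw [h0] at hc
      exact hc.mono_left nhdsWithin_le_nhds
    refine squeeze_zero_norm' ?_ hg
    filter_upwards [self_mem_nhdsWithin] with μ hμm
    have hn : ∀ w, 0 ≤ μ w := hμm.1
    have hlog : Real.log (pm μ f a) ≤ 0 :=
      Real.log_nonpos (pm_nonneg μ hn f a) (pm_le_one μ hn hμm.2 f a)
    have hb1 : pm2 μ f g a b * Real.log (pm μ f a) ≤ 0 :=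
      mul_nonpos_of_nonneg_of_nonpos (pm2_nonneg μ hn f g a b) hlog
    rw [Real.norm_eq_abs, abs_of_nonpos hb1]
    have hstep : pm2 μ f g a b * (-Real.log (pm μ f a))
        ≤ pm μ f a * (-Real.log (pm μ f a)) :=
      mul_le_mul_of_nonneg_right (pm2_le_pm μ hn f g a b) (by linarith)
    simp only [mul_neg] at hstep
    simpa [Real.negMulLog, neg_mul] using hstep
  · have hc0 : ContinuousAt (Real.log ∘ (fun μ : W → ℝ => pm μ f a)) ν :=
      ContinuousAt.comp (Real.continuousAt_log hpm) (continuous_pm f a).continuousAt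
    have hc1 : ContinuousAt (fun μ : W → ℝ => Real.log (pm μ f a)) ν := hc0
    exact ((continuous_pm2 f g a b).continuousAt.mul hc1).continuousWithinAt
end Aux
lemma score_eq {W ι : Type*} [Fintype W] [Fintype ι] {A B : ι → Type*}
    [∀ L, Fintype (A L)] [∀ L, Fintype (B L)]
    (X : (L : ι) → W → A L) (Y : (L : ι) → W → B L)
    (p : (L : ι) → A L → B L → ℝ) (β : ι → ℝ)
    (hpos : ∀ L a b, 0 < p L a b) (γ : ℝ)
    (μ : W → ℝ) (hμ : ∀ w, 0 ≤ μ w) :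
    Inc X Y p β μ + γ * IDef X Y μ
      = (∑ w, μ w * (-(∑ L, β L * Real.log (p L (X L w) (Y L w)))))
        + (∑ L, (β L - γ) * Kfun μ (X L) (Y L))
        + γ * (∑ w, μ w * Real.log (μ w)) := by
  unfold Inc IDef
  have h1 : ∀ L, ∑ a, pm μ (X L) a * klR (condDist μ (X L) (Y L) a) (p L a)
      = Kfun μ (X L) (Y L) - ∑ w, μ w * Real.log (p L (X L w) (Y L w)) :=
    fun L => inc_sum_eq μ hμ (X L) (Y L) (p L) (hpos L)
  have h2 : ∀ L, condEnt μ (X L) (Y L) = - Kfun μ (X L) (Y L) :=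
    fun L => condEnt_eq μ hμ (X L) (Y L)
  simp only [h1, h2, entropy_eq μ]
  have hswap : ∑ w, μ w * (∑ L, β L * Real.log (p L (X L w) (Y L w)))
      = ∑ L, β L * ∑ w, μ w * Real.log (p L (X L w) (Y L w)) := by
    simp only [Finset.mul_sum]
    rw [Finset.sum_comm]
    exact Finset.sum_congr rfl fun L _ => Finset.sum_congr rfl fun w _ => by ring
  have e1 : ∑ L, β L * (Kfun μ (X L) (Y L) - ∑ w, μ w * Real.log (p L (X L w) (Y L w)))
      = ∑ L, β L * Kfun μ (X L) (Y L)
        - ∑ L, β L * ∑ w, μ w * Real.log (p L (X L w) (Y L w)) := by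
    simp only [mul_sub, Finset.sum_sub_distrib]
  have e2 : ∑ L, (β L - γ) * Kfun μ (X L) (Y L)
      = ∑ L, β L * Kfun μ (X L) (Y L) - γ * ∑ L, Kfun μ (X L) (Y L) := by
    rw [Finset.mul_sum, ← Finset.sum_sub_distrib]
    exact Finset.sum_congr rfl fun L _ => by ring
  have e3 : ∑ w, μ w * (-(∑ L, β L * Real.log (p L (X L w) (Y L w))))
      = - ∑ L, β L * ∑ w, μ w * Real.log (p L (X L w) (Y L w)) := by
    simp only [mul_neg, Finset.sum_neg_distrib, hswap]
  have e4 : ∑ L, -Kfun μ (X L) (Y L) = -∑ L, Kfun μ (X L) (Y L) :=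
    Finset.sum_neg_distrib _
  rw [e1, e2, e3, e4]
  ring

lemma score_continuousOn {W ι : Type*} [Fintype W] [Fintype ι] {A B : ι → Type*}
    [∀ L, Fintype (A L)] [∀ L, Fintype (B L)]
    (X : (L : ι) → W → A L) (Y : (L : ι) → W → B L)
    (p : (L : ι) → A L → B L → ℝ) (β : ι → ℝ)
    (hpos : ∀ L a b, 0 < p L a b) (γ : ℝ) :
    ContinuousOn (fun μ : W → ℝ => Inc X Y p β μ + γ * IDef X Y μ) (stdSimplex ℝ W) := by
  have hEq : Set.EqOn (fun μ : W → ℝ => Inc X Y p β μ + γ * IDef X Y μ)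
      (fun μ : W → ℝ =>
        (∑ w, μ w * (-(∑ L, β L * Real.log (p L (X L w) (Y L w)))))
        + (∑ L, (β L - γ) * Kfun μ (X L) (Y L))
        + γ * (∑ w, μ w * Real.log (μ w))) (stdSimplex ℝ W) :=
    fun μ hμ => score_eq X Y p β hpos γ μ hμ.1
  refine ContinuousOn.congr ?_ hEq
  have hlin : Continuous fun μ : W → ℝ =>
      ∑ w, μ w * (-(∑ L, β L * Real.log (p L (X L w) (Y L w)))) :=
    continuous_finset_sum _ fun w _ => (continuous_apply w).mul continuous_const
  have hent : Continuous fun μ : W → ℝ => ∑ w, μ w * Real.log (μ w) := by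
    have e : (fun μ : W → ℝ => ∑ w, μ w * Real.log (μ w))
        = fun μ : W → ℝ => ∑ w, -Real.negMulLog (μ w) := by
      funext μ
      exact Finset.sum_congr rfl fun w _ => by simp [Real.negMulLog]
    rw [e]
    exact continuous_finset_sum _ fun w _ =>
      (Real.continuous_negMulLog.comp (continuous_apply w)).neg
  have hK : ∀ L, ContinuousOn (fun μ : W → ℝ => Kfun μ (X L) (Y L)) (stdSimplex ℝ W) := by
    intro L
    unfold Kfun
    refine continuousOn_finset_sum _ fun a _ => continuousOn_finset_sum _ fun b _ => ?_
    refine ContinuousOn.sub ?_ (continuousOn_pm2_mul_log_pm (X L) (Y L) a b)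
    have e : (fun μ : W → ℝ => pm2 μ (X L) (Y L) a b * Real.log (pm2 μ (X L) (Y L) a b))
        = fun μ : W → ℝ => -Real.negMulLog (pm2 μ (X L) (Y L) a b) := by
      funext μ; simp [Real.negMulLog]
    rw [e]
    exact ((Real.continuous_negMulLog.comp (continuous_pm2 (X L) (Y L) a b)).neg).continuousOn
  exact ((hlin.continuousOn.add
    (continuousOn_finset_sum _ fun L _ => (continuousOn_const.mul (hK L)))).add
    (continuousOn_const.mul hent.continuousOn))


/-- If `0 < γ ≤ min_L β_L`, the PDG score `⟦M⟧_γ = Inc + γ·IDef` is strictly convex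
on the probability simplex, and hence has a unique minimizer there. -/
theorem pdg_score_strictly_convex_and_unique_min {W ι : Type*} [Fintype W] [Nonempty W]
    [Fintype ι] {A B : ι → Type*} [∀ L, Fintype (A L)] [∀ L, Fintype (B L)]
    (X : (L : ι) → W → A L) (Y : (L : ι) → W → B L)
    (p : (L : ι) → A L → B L → ℝ) (β : ι → ℝ)
    (hβ : ∀ L, 0 < β L) (hp : ∀ L a, IsDist (p L a))
    (hpos : ∀ L a b, 0 < p L a b)
    (γ : ℝ) (hγ0 : 0 < γ) (hγβ : ∀ L, γ ≤ β L) :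
    (∀ μ ν : W → ℝ, IsDist μ → IsDist ν → μ ≠ ν → ∀ l : ℝ, 0 < l → l < 1 →
      Inc X Y p β (fun w => l * μ w + (1 - l) * ν w) +
          γ * IDef X Y (fun w => l * μ w + (1 - l) * ν w) <
        l * (Inc X Y p β μ + γ * IDef X Y μ) +
          (1 - l) * (Inc X Y p β ν + γ * IDef X Y ν)) ∧
    (∃! μ : W → ℝ, IsDist μ ∧ ∀ ν : W → ℝ, IsDist ν →
      Inc X Y p β μ + γ * IDef X Y μ ≤ Inc X Y p β ν + γ * IDef X Y ν) := by
  have hstrict : ∀ μ ν : W → ℝ, IsDist μ → IsDist ν → μ ≠ ν → ∀ l : ℝ, 0 < l → l < 1 →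
      Inc X Y p β (fun w => l * μ w + (1 - l) * ν w) +
          γ * IDef X Y (fun w => l * μ w + (1 - l) * ν w) <
        l * (Inc X Y p β μ + γ * IDef X Y μ) +
          (1 - l) * (Inc X Y p β ν + γ * IDef X Y ν) := by
    intro μ ν hμ hν hne l hl hl1
    have hσ0 : ∀ w, 0 ≤ l * μ w + (1 - l) * ν w := fun w => by
      have := hμ.1 w; have := hν.1 w; nlinarith
    rw [score_eq X Y p β hpos γ μ hμ.1, score_eq X Y p β hpos γ ν hν.1,
      score_eq X Y p β hpos γ _ hσ0]
    have hlin : ∑ w, (l * μ w + (1 - l) * ν w) * (-(∑ L, β L * Real.log (p L (X L w) (Y L w))))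
        = l * ∑ w, μ w * (-(∑ L, β L * Real.log (p L (X L w) (Y L w))))
          + (1 - l) * ∑ w, ν w * (-(∑ L, β L * Real.log (p L (X L w) (Y L w)))) := by
      rw [Finset.mul_sum, Finset.mul_sum, ← Finset.sum_add_distrib]
      exact Finset.sum_congr rfl fun w _ => by ring
    have hK : ∑ L, (β L - γ) * Kfun (fun w => l * μ w + (1 - l) * ν w) (X L) (Y L)
        ≤ l * ∑ L, (β L - γ) * Kfun μ (X L) (Y L)
          + (1 - l) * ∑ L, (β L - γ) * Kfun ν (X L) (Y L) := by
      rw [Finset.mul_sum, Finset.mul_sum, ← Finset.sum_add_distrib]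
      refine Finset.sum_le_sum fun L _ => ?_
      have hKc := Kfun_convex μ ν hμ.1 hν.1 (X L) (Y L) l hl hl1
      have hβγ : 0 ≤ β L - γ := by linarith [hγβ L]
      calc (β L - γ) * Kfun (fun w => l * μ w + (1 - l) * ν w) (X L) (Y L)
          ≤ (β L - γ) * (l * Kfun μ (X L) (Y L) + (1 - l) * Kfun ν (X L) (Y L)) :=
            mul_le_mul_of_nonneg_left hKc hβγ
        _ = l * ((β L - γ) * Kfun μ (X L) (Y L))
            + (1 - l) * ((β L - γ) * Kfun ν (X L) (Y L)) := by ring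
    have hE : γ * ∑ w, (l * μ w + (1 - l) * ν w) * Real.log (l * μ w + (1 - l) * ν w)
        < γ * (l * ∑ w, μ w * Real.log (μ w) + (1 - l) * ∑ w, ν w * Real.log (ν w)) :=
      mul_lt_mul_of_pos_left (negent_strict μ ν hμ hν hne l hl hl1) hγ0
    nlinarith [hlin, hK, hE]
  refine ⟨hstrict, ?_⟩
  have hS : (stdSimplex ℝ W).Nonempty := by
    refine ⟨fun w => if w = Classical.arbitrary W then 1 else 0, fun w => ?_, ?_⟩
    · dsimp only
      split <;> norm_num
    · simp
  obtain ⟨μ0, hμ0S, hmin⟩ := (isCompact_stdSimplex ℝ W).exists_isMinOn hS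
    (score_continuousOn X Y p β hpos γ)
  have hμ0d : IsDist μ0 := ⟨hμ0S.1, hμ0S.2⟩
  have hminle : ∀ ν : W → ℝ, IsDist ν →
      Inc X Y p β μ0 + γ * IDef X Y μ0 ≤ Inc X Y p β ν + γ * IDef X Y ν :=
    fun ν hν => hmin (⟨hν.1, hν.2⟩ : ν ∈ stdSimplex ℝ W)
  refine ⟨μ0, ⟨hμ0d, hminle⟩, ?_⟩
  rintro ρ ⟨hρd, hρmin⟩
  by_contra hne
  have hmid := hstrict ρ μ0 hρd hμ0d hne (1/2) (by norm_num) (by norm_num)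
  have hmidd : IsDist (fun w => (1/2 : ℝ) * ρ w + (1 - 1/2) * μ0 w) := by
    constructor
    · intro w
      have := hρd.1 w; have := hμ0d.1 w
      norm_num
      linarith
    · rw [Finset.sum_add_distrib, ← Finset.mul_sum, ← Finset.mul_sum, hρd.2, hμ0d.2]
      norm_num
  have h1 : Inc X Y p β ρ + γ * IDef X Y ρ = Inc X Y p β μ0 + γ * IDef X Y μ0 :=
    le_antisymm (hρmin μ0 hμ0d) (hminle ρ hρd)
  have h2 := hρmin _ hmidd
  rw [h1] at h2 hmid
  linarith
end
end

section
/- Let f, g : S → ℝ be functions on a compact metric space S with f continuous, g continuous, f ≥ 0. For γ > 0 let A_γ = argmin (f + γg). Then the set of limits μ of sequences μ_i ∈ A_{γ_i} with γ_i → 0⁺ is nonempty, contained in argmin f, and moreover g is constant on this limit set (all limit points attain the same value of g, namely min of g over argmin f). -/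
open Filter

/-- Abstract Γ-convergence fact: on a nonempty compact metric space, with `f, g`
continuous and `f ≥ 0`, the set of limits of minimizers of `f + γg` as `γ → 0⁺` is
nonempty, consists of minimizers of `f`, and `g` is minimal (over the minimizers of
`f`) — hence constant — on this limit set. -/
theorem limit_of_regularized_minimizers
    {S : Type*} [MetricSpace S] [CompactSpace S] [Nonempty S]
    (f g : S → ℝ) (hf : Continuous f) (hg : Continuous g) (hf0 : ∀ x, 0 ≤ f x) :
    let Lset : Set S := {μ | ∃ (γs : ℕ → ℝ) (μs : ℕ → S),
      (∀ i, 0 < γs i ∧ ∀ y, f (μs i) + γs i * g (μs i) ≤ f y + γs i * g y) ∧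
      Tendsto γs atTop (nhds 0) ∧ Tendsto μs atTop (nhds μ)}
    Lset.Nonempty ∧
    Lset ⊆ {x | ∀ y, f x ≤ f y} ∧
    (∀ μ ∈ Lset, ∀ ν, (∀ y, f ν ≤ f y) → g μ ≤ g ν) := by
  intro Lset
  -- choose minimizers
  have hγpos : ∀ i : ℕ, (0:ℝ) < 1 / (i + 1) := fun i => by positivity
  have hmin : ∀ i : ℕ, ∃ x : S, ∀ y, f x + (1/(i+1:ℝ)) * g x ≤ f y + (1/(i+1:ℝ)) * g y := by
    intro i
    obtain ⟨x, -, hx⟩ := isCompact_univ.exists_isMinOn Set.univ_nonempty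
      ((hf.add (continuous_const.mul hg)).continuousOn
        (s := (Set.univ : Set S)))
    exact ⟨x, fun y => hx (Set.mem_univ y)⟩
  choose μs hμs using hmin
  set γs : ℕ → ℝ := fun i => 1 / (i + 1) with hγs
  have hγ0 : Tendsto γs atTop (nhds 0) := tendsto_one_div_add_atTop_nhds_zero_nat
  obtain ⟨μ, -, φ, hφ, hconv⟩ := isCompact_univ.tendsto_subseq (fun n => Set.mem_univ (μs n))
  -- generic limit lemma
  have key : ∀ ν ∈ Lset, (∀ y, f ν ≤ f y) ∧ (∀ x, (∀ y, f x ≤ f y) → g ν ≤ g x) := by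
    rintro ν ⟨gs, ms, hms, hgs0, hmsν⟩
    have hfμ : Tendsto (fun i => f (ms i)) atTop (nhds (f ν)) :=
      (hf.continuousAt.tendsto).comp hmsν
    have hgμ : Tendsto (fun i => g (ms i)) atTop (nhds (g ν)) :=
      (hg.continuousAt.tendsto).comp hmsν
    constructor
    · intro y
      have hlim : Tendsto (fun i => f (ms i) + gs i * g (ms i)) atTop
          (nhds (f ν + 0 * g ν)) := hfμ.add (hgs0.mul hgμ)
      have hlim' : Tendsto (fun i => f y + gs i * g y) atTop (nhds (f y + 0 * g y)) :=
        tendsto_const_nhds.add (hgs0.mul tendsto_const_nhds)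
      have := le_of_tendsto_of_tendsto' hlim hlim' (fun i => (hms i).2 y)
      simpa using this
    · intro x hx
      have hle : ∀ i, g (ms i) ≤ g x := by
        intro i
        obtain ⟨hpos, hmin⟩ := hms i
        have h1 := hmin x
        have h2 : f x ≤ f (ms i) := hx _
        nlinarith
      exact le_of_tendsto_of_tendsto' hgμ tendsto_const_nhds hle
  have hμL : μ ∈ Lset := by
    refine ⟨γs ∘ φ, μs ∘ φ, fun i => ⟨hγpos _, hμs _⟩, hγ0.comp hφ.tendsto_atTop, hconv⟩
  exact ⟨⟨μ, hμL⟩, fun ν hν => (key ν hν).1, fun ν hν x hx => (key ν hν).2 x hx⟩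
end
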